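/- arXiv:1803.00936 — 2 statements merged into one kernel-verified Lean document; each statement's English description precedes it below -/
import Mathlib

section
/- Let (L, α_L) and (M, α_M) be hom-Lie-Rinehart algebras over (A, φ) with compatible quasi hom-actions on each other. Then the map f: L × M → L ∗ M given by f(x,m) = x ∗ m is a universal hom-Lie-Rinehart pairing: it is a hom-Lie-Rinehart pairing into (L ∗ M, α_{L∗M}), and for every hom-Lie-Rinehart pairing g: L × M → N into a hom-Lie-Rinehart algebra (N, α_N) over (A, φ) there exists a unique homomorphism Φ: (L ∗ M, α_{L∗M}) → (N, α_N) over (A, φ) with Φ ∘ f = g. -/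
open TensorProduct Function Set

/-- A hom-Lie-Rinehart algebra structure over `(A, φ)` on the `A`-module `L`. -/
structure HLR (R A : Type) [CommRing R] [CommRing A] [Algebra R A]
    (φ : A →ₐ[R] A) (L : Type) [AddCommGroup L] [Module R L]
    [Module A L] [IsScalarTower R A L] : Type where
  bracket : L → L → L
  add_left : ∀ x y z, bracket (x + y) z = bracket x z + bracket y z
  add_right : ∀ x y z, bracket x (y + z) = bracket x y + bracket x z
  smul_left : ∀ (r : R) (x y : L), bracket (r • x) y = r • bracket x y
  smul_right : ∀ (r : R) (x y : L), bracket x (r • y) = r • bracket x y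
  skew : ∀ x y, bracket x y = - bracket y x
  alpha : L → L
  alpha_add : ∀ x y, alpha (x + y) = alpha x + alpha y
  alpha_smulR : ∀ (r : R) (x : L), alpha (r • x) = r • alpha x
  rho : L → A → A
  rho_add_left : ∀ x y a, rho (x + y) a = rho x a + rho y a
  rho_smulR_left : ∀ (r : R) (x : L) (a : A), rho (r • x) a = r • rho x a
  rho_add_right : ∀ (x : L) (a b : A), rho x (a + b) = rho x a + rho x b
  rho_smulR_right : ∀ (x : L) (r : R) (a : A), rho x (r • a) = r • rho x a
  rho_deriv : ∀ (x : L) (a b : A), rho x (a * b) = φ a * rho x b + φ b * rho x a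
  alpha_bracket : ∀ x y, alpha (bracket x y) = bracket (alpha x) (alpha y)
  hom_jacobi : ∀ x y z, bracket (alpha x) (bracket y z)
      + bracket (alpha y) (bracket z x) + bracket (alpha z) (bracket x y) = 0
  alpha_smulA : ∀ (a : A) (x : L), alpha (a • x) = φ a • alpha x
  rho_alpha : ∀ (x : L) (a : A), rho (alpha x) (φ a) = φ (rho x a)
  rho_bracket : ∀ (x y : L) (a : A), rho (bracket x y) (φ a)
      = rho (alpha x) (rho y a) - rho (alpha y) (rho x a)
  rho_smulA : ∀ (a : A) (x : L) (b : A), rho (a • x) b = φ a * rho x b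
  leibniz : ∀ (x : L) (a : A) (y : L),
      bracket x (a • y) = φ a • bracket x y + rho x a • alpha y

section Defs

variable {R A : Type} [CommRing R] [CommRing A] [Algebra R A] {φ : A →ₐ[R] A}

/-- Homomorphism of hom-Lie-Rinehart algebras over `(A, φ)`: an `A`-linear map
preserving brackets, the twist maps and the anchors. -/
def IsHLRHom {K L : Type}
    [AddCommGroup K] [Module R K] [Module A K] [IsScalarTower R A K]
    [AddCommGroup L] [Module R L] [Module A L] [IsScalarTower R A L]
    (SK : HLR R A φ K) (SL : HLR R A φ L) (f : K → L) : Prop :=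
  (∀ x y, f (x + y) = f x + f y) ∧
  (∀ (a : A) (x : K), f (a • x) = a • f x) ∧
  (∀ x y, f (SK.bracket x y) = SL.bracket (f x) (f y)) ∧
  (∀ x, f (SK.alpha x) = SL.alpha (f x)) ∧
  (∀ (x : K) (a : A), SL.rho (f x) a = SK.rho x a)

/-- The center `Z_A(L)` of a hom-Lie-Rinehart algebra. -/
def HLR.center {L : Type}
    [AddCommGroup L] [Module R L] [Module A L] [IsScalarTower R A L]
    (S : HLR R A φ L) : Set L :=
  {x | ∀ (a : A) (z : L),
    S.bracket (a • x) z = 0 ∧ S.bracket (a • S.alpha x) z = 0 ∧ S.rho x a = 0}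

/-- `(M, i) → (K, σ)` is a central extension of `L`. -/
def IsCentralExt {M K L : Type}
    [AddCommGroup M] [Module R M] [Module A M] [IsScalarTower R A M]
    [AddCommGroup K] [Module R K] [Module A K] [IsScalarTower R A K]
    [AddCommGroup L] [Module R L] [Module A L] [IsScalarTower R A L]
    (SM : HLR R A φ M) (SK : HLR R A φ K) (SL : HLR R A φ L)
    (i : M → K) (σ : K → L) : Prop :=
  IsHLRHom SM SK i ∧ IsHLRHom SK SL σ ∧ Function.Injective i ∧
  Function.Surjective σ ∧ Set.range i = {k | σ k = 0} ∧
  {k | σ k = 0} ⊆ SK.center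

/-- `(M, i) → (K, σ)` is an `α`-central extension of `L`. -/
def IsAlphaCentralExt {M K L : Type}
    [AddCommGroup M] [Module R M] [Module A M] [IsScalarTower R A M]
    [AddCommGroup K] [Module R K] [Module A K] [IsScalarTower R A K]
    [AddCommGroup L] [Module R L] [Module A L] [IsScalarTower R A L]
    (SM : HLR R A φ M) (SK : HLR R A φ K) (SL : HLR R A φ L)
    (i : M → K) (σ : K → L) : Prop :=
  IsHLRHom SM SK i ∧ IsHLRHom SK SL σ ∧ Function.Injective i ∧
  Function.Surjective σ ∧ Set.range i = {k | σ k = 0} ∧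
  (∀ m : M, i (SM.alpha m) ∈ SK.center)

/-- A hom-Lie-Rinehart algebra is perfect if `L = {L, L}`, the `A`-submodule
generated by all brackets. -/
def HLR.IsPerfect {L : Type}
    [AddCommGroup L] [Module R L] [Module A L] [IsScalarTower R A L]
    (S : HLR R A φ L) : Prop :=
  Submodule.span A {z : L | ∃ x y, z = S.bracket x y} = ⊤

/-- A hom-Lie-Rinehart algebra is `α`-perfect if `L = {α_L(L), α_L(L)}`. -/
def HLR.IsAlphaPerfect {L : Type}
    [AddCommGroup L] [Module R L] [Module A L] [IsScalarTower R A L]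
    (S : HLR R A φ L) : Prop :=
  Submodule.span A {z : L | ∃ x y, z = S.bracket (S.alpha x) (S.alpha y)} = ⊤

/-- Universal central extension. -/
def IsUniversalCentralExt {M K L : Type}
    [AddCommGroup M] [Module R M] [Module A M] [IsScalarTower R A M]
    [AddCommGroup K] [Module R K] [Module A K] [IsScalarTower R A K]
    [AddCommGroup L] [Module R L] [Module A L] [IsScalarTower R A L]
    (SM : HLR R A φ M) (SK : HLR R A φ K) (SL : HLR R A φ L)
    (i : M → K) (σ : K → L) : Prop :=
  IsCentralExt SM SK SL i σ ∧
  ∀ (M' L' : Type)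
    [AddCommGroup M'] [Module R M'] [Module A M'] [IsScalarTower R A M']
    [AddCommGroup L'] [Module R L'] [Module A L'] [IsScalarTower R A L']
    (SM' : HLR R A φ M') (SL' : HLR R A φ L') (j : M' → L') (τ : L' → L),
    IsCentralExt SM' SL' SL j τ →
    ∃! h : K → L', IsHLRHom SK SL' h ∧ ∀ x, τ (h x) = σ x

/-- Universal `α`-central extension. -/
def IsUniversalAlphaCentralExt {M K L : Type}
    [AddCommGroup M] [Module R M] [Module A M] [IsScalarTower R A M]
    [AddCommGroup K] [Module R K] [Module A K] [IsScalarTower R A K]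
    [AddCommGroup L] [Module R L] [Module A L] [IsScalarTower R A L]
    (SM : HLR R A φ M) (SK : HLR R A φ K) (SL : HLR R A φ L)
    (i : M → K) (σ : K → L) : Prop :=
  IsCentralExt SM SK SL i σ ∧
  ∀ (M' L' : Type)
    [AddCommGroup M'] [Module R M'] [Module A M'] [IsScalarTower R A M']
    [AddCommGroup L'] [Module R L'] [Module A L'] [IsScalarTower R A L']
    (SM' : HLR R A φ M') (SL' : HLR R A φ L') (j : M' → L') (τ : L' → L),
    IsAlphaCentralExt SM' SL' SL j τ →
    ∃! h : K → L', IsHLRHom SK SL' h ∧ ∀ x, τ (h x) = σ x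

end Defs

section UceDefs

variable {R A : Type} [CommRing R] [CommRing A] [Algebra R A] (φ : A →ₐ[R] A)
variable {L : Type} [AddCommGroup L] [Module R L] [Module A L] [IsScalarTower R A L]

/-- The `A`-submodule `M^φ_A L` of `A ⊗ L ⊗ L` of defining relations of `uce^φ_A L`. -/
def uceRel (S : HLR R A φ L) : Submodule A (A ⊗[R] (L ⊗[R] L)) :=
  Submodule.span A
    ({t | ∃ (a : A) (x : L), t = a ⊗ₜ[R] (x ⊗ₜ[R] x)} ∪
     {t | ∃ (a : A) (x y : L), t = a ⊗ₜ[R] (x ⊗ₜ[R] y) + a ⊗ₜ[R] (y ⊗ₜ[R] x)} ∪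
     {t | ∃ (a : A) (x y z : L), t =
        a ⊗ₜ[R] (S.alpha x ⊗ₜ[R] S.bracket y z)
          + a ⊗ₜ[R] (S.alpha y ⊗ₜ[R] S.bracket z x)
          + a ⊗ₜ[R] (S.alpha z ⊗ₜ[R] S.bracket x y)} ∪
     {t | ∃ (a : A) (x y x' y' : L), t =
        φ a ⊗ₜ[R] (S.bracket x y ⊗ₜ[R] S.bracket x' y')
          + S.rho (S.bracket x y) a ⊗ₜ[R] (S.alpha x' ⊗ₜ[R] S.alpha y')
          - (1 : A) ⊗ₜ[R] (S.bracket x y ⊗ₜ[R] (a • S.bracket x' y'))})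

/-- The underlying `A`-module of `uce^φ_A L`. -/
abbrev UCE (S : HLR R A φ L) : Type := (A ⊗[R] (L ⊗[R] L)) ⧸ uceRel φ S

/-- The coset `(a, x, y)` in `uce^φ_A L`. -/
noncomputable def uceMk (S : HLR R A φ L) (a : A) (x y : L) : UCE φ S :=
  Submodule.Quotient.mk (a ⊗ₜ[R] (x ⊗ₜ[R] y))

/-- `U` is the hom-Lie-Rinehart structure of `uce^φ_A L`: its bracket, twist map and anchor
are given by the defining formulas on cosets. -/
def IsUceStructure (S : HLR R A φ L) (U : HLR R A φ (UCE φ S)) : Prop :=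
  (∀ (a₁ a₂ : A) (x₁ y₁ x₂ y₂ : L),
    U.bracket (uceMk φ S a₁ x₁ y₁) (uceMk φ S a₂ x₂ y₂) =
      uceMk φ S (φ (a₁ * a₂)) (S.bracket x₁ y₁) (S.bracket x₂ y₂)
      + uceMk φ S (φ a₁ * S.rho (S.bracket x₁ y₁) a₂) (S.alpha x₂) (S.alpha y₂)
      - uceMk φ S (φ a₂ * S.rho (S.bracket x₂ y₂) a₁) (S.alpha x₁) (S.alpha y₁)) ∧
  (∀ (a : A) (x y : L),
    U.alpha (uceMk φ S a x y) = uceMk φ S (φ a) (S.alpha x) (S.alpha y)) ∧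
  (∀ (a b : A) (x y : L),
    U.rho (uceMk φ S a x y) b = φ a * S.rho (S.bracket x y) b)

/-- `u` is the canonical map `u_L : uce^φ_A L → L`, `(a,x,y) ↦ a • [x,y]`. -/
def IsUceMap (S : HLR R A φ L) (u : UCE φ S → L) : Prop :=
  (∀ ξ η, u (ξ + η) = u ξ + u η) ∧
  (∀ (a : A) (ξ : UCE φ S), u (a • ξ) = a • u ξ) ∧
  (∀ (a : A) (x y : L), u (uceMk φ S a x y) = a • S.bracket x y)

end UceDefs

section MoreDefs

variable {R A : Type} [CommRing R] [CommRing A] [Algebra R A] (φ : A →ₐ[R] A)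

/-- `F` is the homomorphism `uce^φ_A(f)` induced by `f` on universal central extensions. -/
def IsUceFunctorMap {K L : Type}
    [AddCommGroup K] [Module R K] [Module A K] [IsScalarTower R A K]
    [AddCommGroup L] [Module R L] [Module A L] [IsScalarTower R A L]
    (SK : HLR R A φ K) (SL : HLR R A φ L)
    (UK : HLR R A φ (UCE φ SK)) (UL : HLR R A φ (UCE φ SL))
    (f : K → L) (F : UCE φ SK → UCE φ SL) : Prop :=
  IsHLRHom UK UL F ∧
  ∀ (a : A) (x y : K), F (uceMk φ SK a x y) = uceMk φ SL a (f x) (f y)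

/-- `D` is an `α`-derivation of `(L, α_L)` with symbol `σD`. -/
def IsAlphaDeriv {L : Type}
    [AddCommGroup L] [Module R L] [Module A L] [IsScalarTower R A L]
    (S : HLR R A φ L) (D : L → L) (σD : A → A) : Prop :=
  (∀ x y, D (x + y) = D x + D y) ∧
  (∀ (r : R) (x : L), D (r • x) = r • D x) ∧
  (∀ a b, σD (a + b) = σD a + σD b) ∧
  (∀ (r : R) (a : A), σD (r • a) = r • σD a) ∧
  (∀ a b, σD (a * b) = φ a * σD b + φ b * σD a) ∧
  (∀ x, D (S.alpha x) = S.alpha (D x)) ∧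
  (∀ x y, D (S.bracket x y) = S.bracket (D x) (S.alpha y) + S.bracket (S.alpha x) (D y)) ∧
  (∀ a, σD (φ a) = φ (σD a)) ∧
  (∀ (a : A) (x : L), D (a • x) = φ a • D x + σD a • S.alpha x) ∧
  (∀ (x : L) (a : A), σD (S.rho x a) = S.rho (S.alpha x) (σD a) + S.rho (D x) (φ a))

/-- A quasi hom-action of `(L, α_L)` on `(M, α_M)`. -/
def IsQuasiHomAction {L M : Type}
    [AddCommGroup L] [Module R L] [Module A L] [IsScalarTower R A L]
    [AddCommGroup M] [Module R M] [Module A M] [IsScalarTower R A M]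
    (SL : HLR R A φ L) (SM : HLR R A φ M) (act : L → M → M) : Prop :=
  (∀ (x : L) (a : A) (m : M),
      act x (a • m) = φ a • act x m + SL.rho x a • SM.alpha m) ∧
  (∀ (x y : L) (m : M),
      act (SL.bracket x y) (SM.alpha m)
        = act (SL.alpha x) (act y m) - act (SL.alpha y) (act x m)) ∧
  (∀ (x : L) (m n : M),
      act (SL.alpha x) (SM.bracket m n)
        = SM.bracket (act x m) (SM.alpha n) + SM.bracket (SM.alpha m) (act x n)) ∧
  (∀ (x : L) (m : M) (a : A),
      SM.rho (act x m) (φ a)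
        = SL.rho (SL.alpha x) (SM.rho m a) - SM.rho (SM.alpha m) (SL.rho x a)) ∧
  (∀ (x : L) (m : M), SM.alpha (act x m) = act (SL.alpha x) (SM.alpha m))

/-- Compatibility of two quasi hom-actions on each other. -/
def AreCompatibleActions {L M : Type}
    [AddCommGroup L] [Module R L] [Module A L] [IsScalarTower R A L]
    [AddCommGroup M] [Module R M] [Module A M] [IsScalarTower R A M]
    (SL : HLR R A φ L) (SM : HLR R A φ M)
    (actLM : L → M → M) (actML : M → L → L) : Prop :=
  (∀ (x : L) (m : M) (a : A), SM.rho (actLM x m) a = - SL.rho (actML m x) a) ∧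
  (∀ (m : M) (x : L) (n : M), actLM (actML m x) n = SM.bracket n (actLM x m)) ∧
  (∀ (x : L) (m : M) (y : L), actML (actLM x m) y = SL.bracket y (actML m x))

end MoreDefs

section StarDefs

variable {R A : Type} [CommRing R] [CommRing A] [Algebra R A] (φ : A →ₐ[R] A)
variable {L M : Type}
  [AddCommGroup L] [Module R L] [Module A L] [IsScalarTower R A L]
  [AddCommGroup M] [Module R M] [Module A M] [IsScalarTower R A M]

/-- The `A`-submodule of defining relations of the non-abelian tensor product `L ∗ M`,
inside the free `A`-module on the symbols `x ∗ m`. -/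
noncomputable def starRel (SL : HLR R A φ L) (SM : HLR R A φ M)
    (actLM : L → M → M) (actML : M → L → L) : Submodule A ((L × M) →₀ A) :=
  Submodule.span A
    ({t | ∃ (x y : L) (m : M), t =
        Finsupp.single (x + y, m) (1 : A) - Finsupp.single (x, m) 1
          - Finsupp.single (y, m) 1} ∪
     {t | ∃ (r : R) (x : L) (m : M), t =
        Finsupp.single (r • x, m) (1 : A) - r • Finsupp.single (x, m) (1 : A)} ∪
     {t | ∃ (x : L) (m n : M), t =
        Finsupp.single (x, m + n) (1 : A) - Finsupp.single (x, m) 1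
          - Finsupp.single (x, n) 1} ∪
     {t | ∃ (r : R) (x : L) (m : M), t =
        Finsupp.single (x, r • m) (1 : A) - r • Finsupp.single (x, m) (1 : A)} ∪
     {t | ∃ (x y : L) (m : M), t =
        Finsupp.single (SL.bracket x y, SM.alpha m) (1 : A)
          - Finsupp.single (SL.alpha x, actLM y m) 1
          + Finsupp.single (SL.alpha y, actLM x m) 1} ∪
     {t | ∃ (x : L) (m n : M), t =
        Finsupp.single (SL.alpha x, SM.bracket m n) (1 : A)
          - Finsupp.single (actML n x, SM.alpha m) 1
          + Finsupp.single (actML m x, SM.alpha n) 1} ∪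
     {t | ∃ (a b : A) (x y : L) (m n : M), t =
        Finsupp.single (a • actML m x, b • actLM y n) (1 : A)
          + Finsupp.single (b • actML n y, a • actLM x m) 1} ∪
     {t | ∃ (a b : A) (x y : L) (m n : M), t =
        Finsupp.single (a • actML m x, b • actLM y n) (1 : A)
          - φ (a * b) • Finsupp.single (actML m x, actLM y n) (1 : A)
          + (φ a * SM.rho (actLM x m) b) • Finsupp.single (SL.alpha y, SM.alpha n) (1 : A)
          - (φ b * SM.rho (actLM y n) a) • Finsupp.single (SL.alpha x, SM.alpha m) (1 : A)})

/-- The underlying `A`-module of the non-abelian tensor product `L ∗ M`. -/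
abbrev StarMod (SL : HLR R A φ L) (SM : HLR R A φ M)
    (actLM : L → M → M) (actML : M → L → L) : Type :=
  ((L × M) →₀ A) ⧸ starRel φ SL SM actLM actML

/-- The generator `x ∗ m` of `L ∗ M`. -/
noncomputable def starMk (SL : HLR R A φ L) (SM : HLR R A φ M)
    (actLM : L → M → M) (actML : M → L → L) (x : L) (m : M) :
    StarMod φ SL SM actLM actML :=
  Submodule.Quotient.mk (Finsupp.single (x, m) (1 : A))

/-- `U` is the hom-Lie-Rinehart structure of the non-abelian tensor product `L ∗ M`. -/
def IsStarStructure (SL : HLR R A φ L) (SM : HLR R A φ M)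
    (actLM : L → M → M) (actML : M → L → L)
    (U : HLR R A φ (StarMod φ SL SM actLM actML)) : Prop :=
  (∀ (x : L) (m : M),
      U.alpha (starMk φ SL SM actLM actML x m)
        = starMk φ SL SM actLM actML (SL.alpha x) (SM.alpha m)) ∧
  (∀ (a b : A) (x y : L) (m n : M),
      U.bracket (a • starMk φ SL SM actLM actML x m)
          (b • starMk φ SL SM actLM actML y n)
        = - starMk φ SL SM actLM actML (a • actML m x) (b • actLM y n)) ∧
  (∀ (x : L) (m : M) (a : A),
      U.rho (starMk φ SL SM actLM actML x m) a = SM.rho (actLM x m) a)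

/-- A hom-Lie-Rinehart pairing of `(L, α_L)` and `(M, α_M)` into `(N, α_N)`. -/
def IsHLRPairing {N : Type}
    [AddCommGroup N] [Module R N] [Module A N] [IsScalarTower R A N]
    (SL : HLR R A φ L) (SM : HLR R A φ M) (SN : HLR R A φ N)
    (actLM : L → M → M) (actML : M → L → L) (f : L → M → N) : Prop :=
  (∀ (x y : L) (m : M), f (x + y) m = f x m + f y m) ∧
  (∀ (r : R) (x : L) (m : M), f (r • x) m = r • f x m) ∧
  (∀ (x : L) (m n : M), f x (m + n) = f x m + f x n) ∧
  (∀ (r : R) (x : L) (m : M), f x (r • m) = r • f x m) ∧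
  (∀ (x : L) (m : M) (a : A), SN.rho (f x m) a = SM.rho (actLM x m) a) ∧
  (∀ (x y : L) (m : M),
      f (SL.bracket x y) (SM.alpha m)
        = f (SL.alpha x) (actLM y m) - f (SL.alpha y) (actLM x m)) ∧
  (∀ (x : L) (m n : M),
      f (SL.alpha x) (SM.bracket m n)
        = f (actML n x) (SM.alpha m) - f (actML m x) (SM.alpha n)) ∧
  (∀ (x : L) (m : M), f (SL.alpha x) (SM.alpha m) = SN.alpha (f x m)) ∧
  (∀ (a b : A) (x y : L) (m n : M),
      f (a • actML m x) (b • actLM y n)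
        = - (φ (a * b) • SN.bracket (f x m) (f y n))
          - (φ a * SN.rho (f x m) b) • SN.alpha (f y n)
          + (φ b * SN.rho (f y n) a) • SN.alpha (f x m))

end StarDefs


section Aux
variable {R A : Type} [CommRing R] [CommRing A] [Algebra R A] {φ : A →ₐ[R] A}
variable {L : Type} [AddCommGroup L] [Module R L] [Module A L] [IsScalarTower R A L]

theorem HLR_alpha_zero (S : HLR R A φ L) : S.alpha 0 = 0 := by
  have h := S.alpha_add 0 0
  rw [add_zero] at h
  exact add_eq_left.mp h.symm

theorem HLR_bracket_zero_left (S : HLR R A φ L) (y : L) : S.bracket 0 y = 0 := by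
  have h := S.add_left 0 0 y
  rw [add_zero] at h
  exact add_eq_left.mp h.symm

theorem HLR_bracket_zero_right (S : HLR R A φ L) (x : L) : S.bracket x 0 = 0 := by
  rw [S.skew, HLR_bracket_zero_left, neg_zero]

theorem HLR_rho_zero_left (S : HLR R A φ L) (a : A) : S.rho 0 a = 0 := by
  have h := S.rho_add_left 0 0 a
  rw [add_zero] at h
  exact add_eq_left.mp h.symm

theorem HLR_rho_one (S : HLR R A φ L) (x : L) : S.rho x 1 = 0 := by
  have h := S.rho_deriv x 1 1
  rw [mul_one, map_one, one_mul] at h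
  exact add_eq_left.mp h.symm

theorem HLR_bracket_smul_smul (S : HLR R A φ L) (a b : A) (u v : L) :
    S.bracket (a • u) (b • v) =
      φ (a * b) • S.bracket u v + (φ a * S.rho u b) • S.alpha v
        - (φ b * S.rho v a) • S.alpha u := by
  rw [S.leibniz (a • u) b v, S.skew (a • u) v, S.leibniz v a u, S.rho_smulA,
    S.skew v u, map_mul]
  simp only [smul_neg, smul_add, smul_smul, neg_add, neg_neg, mul_comm (φ b) (φ a)]
  abel
end Aux

/-- `(x, m) ↦ x ∗ m` is a universal hom-Lie-Rinehart pairing: it is a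
hom-Lie-Rinehart pairing into `L ∗ M` and every hom-Lie-Rinehart pairing factors uniquely
through it via a homomorphism of hom-Lie-Rinehart algebras over `(A, φ)`. -/
theorem statement_17
    {R A : Type} [CommRing R] [CommRing A] [Algebra R A] (φ : A →ₐ[R] A)
    {L M : Type}
    [AddCommGroup L] [Module R L] [Module A L] [IsScalarTower R A L]
    [AddCommGroup M] [Module R M] [Module A M] [IsScalarTower R A M]
    (SL : HLR R A φ L) (SM : HLR R A φ M)
    (actLM : L → M → M) (actML : M → L → L)
    (hLM : IsQuasiHomAction φ SL SM actLM)
    (hML : IsQuasiHomAction φ SM SL actML)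
    (hcomp : AreCompatibleActions φ SL SM actLM actML)
    (U : HLR R A φ (StarMod φ SL SM actLM actML))
    (hU : IsStarStructure φ SL SM actLM actML U) :
    IsHLRPairing φ SL SM U actLM actML (starMk φ SL SM actLM actML) ∧
    ∀ (N : Type)
      [AddCommGroup N] [Module R N] [Module A N] [IsScalarTower R A N]
      (SN : HLR R A φ N) (g : L → M → N),
      IsHLRPairing φ SL SM SN actLM actML g →
      ∃! Φ : StarMod φ SL SM actLM actML → N,
        IsHLRHom U SN Φ ∧ ∀ (x : L) (m : M), Φ (starMk φ SL SM actLM actML x m) = g x m := by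
  classical
  obtain ⟨hUα, hUb, hUρ⟩ := hU
  set st := starMk φ SL SM actLM actML with hst
  have hz : ∀ {t : (L × M) →₀ A}, t ∈ starRel φ SL SM actLM actML →
      (Submodule.Quotient.mk t : StarMod φ SL SM actLM actML) = 0 :=
    fun ht => (Submodule.Quotient.mk_eq_zero _).mpr ht
  -- the eight relation families hold in the quotient
  have p1 : ∀ (x y : L) (m : M), st (x + y) m = st x m + st y m := by
    intro x y m
    have h := hz (Submodule.subset_span
      (Or.inl (Or.inl (Or.inl (Or.inl (Or.inl (Or.inl (Or.inl ⟨x, y, m, rfl⟩))))))))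
    rw [Submodule.Quotient.mk_sub, Submodule.Quotient.mk_sub, sub_sub, sub_eq_zero] at h
    exact h
  have p2 : ∀ (r : R) (x : L) (m : M), st (r • x) m = r • st x m := by
    intro r x m
    have h := hz (Submodule.subset_span
      (Or.inl (Or.inl (Or.inl (Or.inl (Or.inl (Or.inl (Or.inr ⟨r, x, m, rfl⟩))))))))
    rw [Submodule.Quotient.mk_sub, Submodule.Quotient.mk_smul, sub_eq_zero] at h
    exact h
  have p3 : ∀ (x : L) (m n : M), st x (m + n) = st x m + st x n := by
    intro x m n
    have h := hz (Submodule.subset_span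
      (Or.inl (Or.inl (Or.inl (Or.inl (Or.inl (Or.inr ⟨x, m, n, rfl⟩)))))))
    rw [Submodule.Quotient.mk_sub, Submodule.Quotient.mk_sub, sub_sub, sub_eq_zero] at h
    exact h
  have p4 : ∀ (r : R) (x : L) (m : M), st x (r • m) = r • st x m := by
    intro r x m
    have h := hz (Submodule.subset_span
      (Or.inl (Or.inl (Or.inl (Or.inl (Or.inr ⟨r, x, m, rfl⟩))))))
    rw [Submodule.Quotient.mk_sub, Submodule.Quotient.mk_smul, sub_eq_zero] at h
    exact h
  have p5 : ∀ (x y : L) (m : M),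
      st (SL.bracket x y) (SM.alpha m)
        = st (SL.alpha x) (actLM y m) - st (SL.alpha y) (actLM x m) := by
    intro x y m
    have h := hz (Submodule.subset_span
      (Or.inl (Or.inl (Or.inl (Or.inr ⟨x, y, m, rfl⟩)))))
    rw [Submodule.Quotient.mk_add, Submodule.Quotient.mk_sub, sub_add_eq_add_sub,
      sub_eq_zero] at h
    rw [eq_sub_iff_add_eq]
    exact h
  have p6 : ∀ (x : L) (m n : M),
      st (SL.alpha x) (SM.bracket m n)
        = st (actML n x) (SM.alpha m) - st (actML m x) (SM.alpha n) := by
    intro x m n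
    have h := hz (Submodule.subset_span
      (Or.inl (Or.inl (Or.inr ⟨x, m, n, rfl⟩))))
    rw [Submodule.Quotient.mk_add, Submodule.Quotient.mk_sub, sub_add_eq_add_sub,
      sub_eq_zero] at h
    rw [eq_sub_iff_add_eq]
    exact h
  have hbrgen : ∀ (x y : L) (m n : M),
      U.bracket (st x m) (st y n) = - st (actML m x) (actLM y n) := by
    intro x y m n
    have h := hUb 1 1 x y m n
    simpa using h
  have p9 : ∀ (a b : A) (x y : L) (m n : M),
      st (a • actML m x) (b • actLM y n)
        = - (φ (a * b) • U.bracket (st x m) (st y n))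
          - (φ a * U.rho (st x m) b) • U.alpha (st y n)
          + (φ b * U.rho (st y n) a) • U.alpha (st x m) := by
    intro a b x y m n
    have h := hz (Submodule.subset_span (Or.inr ⟨a, b, x, y, m, n, rfl⟩))
    rw [Submodule.Quotient.mk_sub, Submodule.Quotient.mk_add, Submodule.Quotient.mk_sub,
      Submodule.Quotient.mk_smul, Submodule.Quotient.mk_smul, Submodule.Quotient.mk_smul] at h
    rw [sub_eq_zero] at h
    have hone : ∀ (x : L) (m : M),
        (Submodule.Quotient.mk (Finsupp.single (x, m) (1 : A))
          : StarMod φ SL SM actLM actML) = st x m := fun _ _ => rfl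
    simp only [hone] at h
    rw [hbrgen, hUρ, hUρ, hUα, hUα, smul_neg, neg_neg]
    rw [← h]
    abel
  refine ⟨⟨p1, p2, p3, p4, hUρ, p5, p6, fun x m => (hUα x m).symm, p9⟩, ?_⟩
  intro N _ _ _ _ SN g hg
  obtain ⟨g1, g2, g3, g4, g5, g6, g7, g8, g9⟩ := hg
  set F : ((L × M) →₀ A) →ₗ[A] N :=
    Finsupp.lsum A (fun p => LinearMap.toSpanSingleton A N (g p.1 p.2)) with hF
  have hFs : ∀ (p : L × M) (a : A), F (Finsupp.single p a) = a • g p.1 p.2 := by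
    intro p a; simp [hF]
  have hgNeg : ∀ (x : L) (m : M) (y : L) (n : M),
      g (actML m x) (actLM y n) = - SN.bracket (g x m) (g y n) := by
    intro x m y n
    have h := g9 1 1 x y m n
    simpa [HLR_rho_one] using h
  have hker : starRel φ SL SM actLM actML ≤ LinearMap.ker F := by
    rw [starRel, Submodule.span_le]
    intro t ht
    simp only [Set.mem_union, Set.mem_setOf_eq] at ht
    obtain (((((((⟨x, y, m, rfl⟩ | ⟨r, x, m, rfl⟩) | ⟨x, m, n, rfl⟩) | ⟨r, x, m, rfl⟩) |
      ⟨x, y, m, rfl⟩) | ⟨x, m, n, rfl⟩) | ⟨a, b, x, y, m, n, rfl⟩) |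
      ⟨a, b, x, y, m, n, rfl⟩) := ht
    · simp only [SetLike.mem_coe, LinearMap.mem_ker, map_sub, hFs, one_smul, g1]
      abel
    · simp only [SetLike.mem_coe, LinearMap.mem_ker, map_sub,
        LinearMap.map_smul_of_tower, hFs, one_smul, g2]
      abel
    · simp only [SetLike.mem_coe, LinearMap.mem_ker, map_sub, hFs, one_smul, g3]
      abel
    · simp only [SetLike.mem_coe, LinearMap.mem_ker, map_sub,
        LinearMap.map_smul_of_tower, hFs, one_smul, g4]
      abel
    · simp only [SetLike.mem_coe, LinearMap.mem_ker, map_add, map_sub, hFs, one_smul, g6]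
      abel
    · simp only [SetLike.mem_coe, LinearMap.mem_ker, map_add, map_sub, hFs, one_smul, g7]
      abel
    · have e1 := g9 a b x y m n
      have e2 := g9 b a y x n m
      simp only [SetLike.mem_coe, LinearMap.mem_ker, map_add, hFs, one_smul, e1, e2]
      rw [mul_comm b a, SN.skew (g y n) (g x m)]
      simp only [smul_neg, neg_neg]
      abel
    · simp only [SetLike.mem_coe, LinearMap.mem_ker, map_sub, map_add, map_smul, hFs,
        one_smul, g9, hgNeg, g8, g5, smul_neg, neg_neg]
      abel
  set Φ0 : StarMod φ SL SM actLM actML →ₗ[A] N := Submodule.liftQ _ F hker with hΦ0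
  have hΦs : ∀ (x : L) (m : M), Φ0 (st x m) = g x m := by
    intro x m
    show Φ0 (Submodule.Quotient.mk _) = _
    rw [hΦ0, Submodule.liftQ_apply, hFs, one_smul]
  have hsingle : ∀ (p : L × M) (a : A),
      (Submodule.Quotient.mk (Finsupp.single p a) : StarMod φ SL SM actLM actML)
        = a • st p.1 p.2 := by
    intro p a
    rw [show (Finsupp.single p a) = a • Finsupp.single p (1 : A) by
      simp [Finsupp.smul_single]]
    exact Submodule.Quotient.mk_smul _ a _
  have hind : ∀ (P : StarMod φ SL SM actLM actML → Prop), P 0 →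
      (∀ (a : A) (x : L) (m : M) ξ, P ξ → P (a • st x m + ξ)) → ∀ ξ, P ξ := by
    intro P h0 hstep ξ
    obtain ⟨f, rfl⟩ := Submodule.Quotient.mk_surjective _ ξ
    induction f using Finsupp.induction with
    | zero => rw [Submodule.Quotient.mk_zero]; exact h0
    | single_add p a f _ _ ih =>
        rw [Submodule.Quotient.mk_add, hsingle]
        exact hstep a p.1 p.2 _ ih
  have hα : ∀ ξ, Φ0 (U.alpha ξ) = SN.alpha (Φ0 ξ) := by
    refine hind _ ?_ ?_
    · simp only [HLR_alpha_zero U, HLR_alpha_zero SN, map_zero]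
    · intro a x m ξ ih
      simp only [U.alpha_add, U.alpha_smulA, hUα, map_add, map_smul, hΦs, ih,
        SN.alpha_add, SN.alpha_smulA, g8]
  have hρ : ∀ ξ (c : A), SN.rho (Φ0 ξ) c = U.rho ξ c := by
    refine hind (fun ξ => ∀ c : A, SN.rho (Φ0 ξ) c = U.rho ξ c) ?_ ?_
    · intro c; rw [map_zero, HLR_rho_zero_left SN, HLR_rho_zero_left U]
    · intro a x m ξ ih c
      simp only [map_add, map_smul, SN.rho_add_left, SN.rho_smulA, hΦs, g5, ih,
        U.rho_add_left, U.rho_smulA, hUρ]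
  have hbr1 : ∀ (a : A) (x : L) (m : M) ξ,
      Φ0 (U.bracket (a • st x m) ξ) = SN.bracket (Φ0 (a • st x m)) (Φ0 ξ) := by
    intro a x m
    refine hind _ ?_ ?_
    · simp only [HLR_bracket_zero_right U, HLR_bracket_zero_right SN, map_zero]
    · intro b y n ξ ih
      rw [U.add_right, map_add, ih, hUb, map_neg, hΦs, g9, map_add, map_smul, map_smul,
        hΦs, hΦs, SN.add_right, HLR_bracket_smul_smul]
      simp only [g5, smul_neg, neg_neg, neg_add_rev, neg_sub]
      abel
  have hbr : ∀ ξ η, Φ0 (U.bracket ξ η) = SN.bracket (Φ0 ξ) (Φ0 η) := by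
    intro ξ η
    refine hind (fun ξ => ∀ η, Φ0 (U.bracket ξ η) = SN.bracket (Φ0 ξ) (Φ0 η)) ?_ ?_ ξ η
    · intro η
      simp only [HLR_bracket_zero_left U, HLR_bracket_zero_left SN, map_zero]
    · intro a x m ξ' ih η
      rw [U.add_left, map_add, hbr1, ih, map_add, SN.add_left]
  refine ⟨Φ0, ⟨⟨fun x y => map_add Φ0 x y, fun a x => map_smul Φ0 a x, hbr, hα,
    fun ξ c => hρ ξ c⟩, hΦs⟩, ?_⟩
  intro Φ' hΦ'
  obtain ⟨⟨hadd', hsmul', -, -, -⟩, hval'⟩ := hΦ'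
  have h0' : Φ' 0 = 0 := by
    have h := hadd' 0 0
    rw [add_zero] at h
    exact add_eq_left.mp h.symm
  funext ξ
  refine hind (fun ξ => Φ' ξ = Φ0 ξ) ?_ ?_ ξ
  · simp only [h0', map_zero]
  · intro a x m ξ' ih
    rw [hadd', hsmul', hval', ih, map_add, map_smul, hΦs]
end

section
/- Let (L₁, α_{L₁}) →^f (L₂, α_{L₂}) →^g (L₃, α_{L₃}) be a short exact sequence of hom-Lie-Rinehart algebras over (A, φ) (f injective, g surjective, Ker(g) = Im(f)) and let (M, α_M) be a hom-Lie-Rinehart algebra over (A, φ) such that, for each i ∈ {1,2,3}, (M, α_M) and (Lᵢ, α_{Lᵢ}) have compatible quasi hom-actions on each other, and f and g preserve these actions: f(ᵖx) = ᵖ(f(x)), ˣp = ^(f(x))p, g(ᵖs) = ᵖ(g(s)), and ˢp = ^(g(s))p for x ∈ L₁, s ∈ L₂, p ∈ M. Then the sequence (L₁ ∗ M, α_{L₁∗M}) →^{f∗Id_M} (L₂ ∗ M, α_{L₂∗M}) →^{g∗Id_M} (L₃ ∗ M, α_{L₃∗M}) is exact (Im(f∗Id_M) = Ker(g∗Id_M))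 and g∗Id_M is surjective, where f∗Id_M and g∗Id_M send x∗m to f(x)∗m and s∗m to g(s)∗m respectively. -/
open TensorProduct Function Set

set_option maxHeartbeats 1600000 in
/-- right-exactness of the non-abelian tensor product: a short exact sequence
`L₁ → L₂ → L₃` with action-preserving maps induces an exact sequence
`L₁ ∗ M → L₂ ∗ M → L₃ ∗ M` with surjective second map. -/
theorem statement_19
    {R A : Type} [CommRing R] [CommRing A] [Algebra R A] (φ : A →ₐ[R] A)
    {L₁ L₂ L₃ M : Type}
    [AddCommGroup L₁] [Module R L₁] [Module A L₁] [IsScalarTower R A L₁]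
    [AddCommGroup L₂] [Module R L₂] [Module A L₂] [IsScalarTower R A L₂]
    [AddCommGroup L₃] [Module R L₃] [Module A L₃] [IsScalarTower R A L₃]
    [AddCommGroup M] [Module R M] [Module A M] [IsScalarTower R A M]
    (S₁ : HLR R A φ L₁) (S₂ : HLR R A φ L₂) (S₃ : HLR R A φ L₃) (SM : HLR R A φ M)
    (f : L₁ → L₂) (g : L₂ → L₃)
    (hf : IsHLRHom S₁ S₂ f) (hg : IsHLRHom S₂ S₃ g)
    (hinj : Function.Injective f) (hsurj : Function.Surjective g)
    (hexact : Set.range f = {x | g x = 0})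
    (act₁ : L₁ → M → M) (coact₁ : M → L₁ → L₁)
    (act₂ : L₂ → M → M) (coact₂ : M → L₂ → L₂)
    (act₃ : L₃ → M → M) (coact₃ : M → L₃ → L₃)
    (hq₁ : IsQuasiHomAction φ S₁ SM act₁) (hq₁' : IsQuasiHomAction φ SM S₁ coact₁)
    (hc₁ : AreCompatibleActions φ S₁ SM act₁ coact₁)
    (hq₂ : IsQuasiHomAction φ S₂ SM act₂) (hq₂' : IsQuasiHomAction φ SM S₂ coact₂)
    (hc₂ : AreCompatibleActions φ S₂ SM act₂ coact₂)
    (hq₃ : IsQuasiHomAction φ S₃ SM act₃) (hq₃' : IsQuasiHomAction φ SM S₃ coact₃)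
    (hc₃ : AreCompatibleActions φ S₃ SM act₃ coact₃)
    (hpres₁ : ∀ (p : M) (x : L₁), f (coact₁ p x) = coact₂ p (f x))
    (hpres₂ : ∀ (x : L₁) (p : M), act₁ x p = act₂ (f x) p)
    (hpres₃ : ∀ (p : M) (s : L₂), g (coact₂ p s) = coact₃ p (g s))
    (hpres₄ : ∀ (s : L₂) (p : M), act₂ s p = act₃ (g s) p)
    (U₁ : HLR R A φ (StarMod φ S₁ SM act₁ coact₁))
    (hU₁ : IsStarStructure φ S₁ SM act₁ coact₁ U₁)
    (U₂ : HLR R A φ (StarMod φ S₂ SM act₂ coact₂))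
    (hU₂ : IsStarStructure φ S₂ SM act₂ coact₂ U₂)
    (U₃ : HLR R A φ (StarMod φ S₃ SM act₃ coact₃))
    (hU₃ : IsStarStructure φ S₃ SM act₃ coact₃ U₃)
    (F : StarMod φ S₁ SM act₁ coact₁ → StarMod φ S₂ SM act₂ coact₂)
    (hFhom : IsHLRHom U₁ U₂ F)
    (hFform : ∀ (x : L₁) (m : M),
      F (starMk φ S₁ SM act₁ coact₁ x m) = starMk φ S₂ SM act₂ coact₂ (f x) m)
    (G : StarMod φ S₂ SM act₂ coact₂ → StarMod φ S₃ SM act₃ coact₃)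
    (hGhom : IsHLRHom U₂ U₃ G)
    (hGform : ∀ (s : L₂) (m : M),
      G (starMk φ S₂ SM act₂ coact₂ s m) = starMk φ S₃ SM act₃ coact₃ (g s) m) :
    Function.Surjective G ∧ Set.range F = {ξ | G ξ = 0} := by
  classical
  -- basic facts about the maps
  have hF0 : F 0 = 0 := by simpa using hFhom.2.1 0 0
  have hG0 : G 0 = 0 := by simpa using hGhom.2.1 0 0
  have hg0 : g 0 = 0 := by simpa using hg.2.1 0 0
  have hgR : ∀ (r : R) (σ : L₂), g (r • σ) = r • g σ := by
    intro r σ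
    rw [← algebraMap_smul A r σ, hg.2.1, algebraMap_smul]
  have hgsub : ∀ σ σ' : L₂, g (σ - σ') = g σ - g σ' := by
    intro σ σ'
    rw [sub_eq_add_neg, hg.1, ← neg_one_smul A σ', hg.2.1, neg_one_smul, ← sub_eq_add_neg]
  -- the A-submodule N = range F
  let N : Submodule A (StarMod φ S₂ SM act₂ coact₂) :=
    { carrier := Set.range F
      add_mem' := by rintro _ _ ⟨ξ, rfl⟩ ⟨η, rfl⟩; exact ⟨ξ + η, hFhom.1 ξ η⟩
      zero_mem' := ⟨0, hF0⟩
      smul_mem' := by rintro a _ ⟨ξ, rfl⟩; exact ⟨a • ξ, hFhom.2.1 a ξ⟩ }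
  -- a section of g
  let s : L₃ → L₂ := Function.surjInv hsurj
  have hs : ∀ t, g (s t) = t := Function.surjInv_eq hsurj
  have hact : ∀ (t : L₃) (m : M), act₃ t m = act₂ (s t) m := by
    intro t m; rw [hpres₄, hs]
  -- the defining relations of L₂ ∗ M, as identities in StarMod₂
  have hmem2 : ∀ c : (L₂ × M) →₀ A,
      c ∈ starRel φ S₂ SM act₂ coact₂ →
      (Submodule.Quotient.mk c : StarMod φ S₂ SM act₂ coact₂) = 0 := by
    intro c hc; rwa [Submodule.Quotient.mk_eq_zero]
  have hmk2 : ∀ (x : L₂) (m : M),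
      (Submodule.Quotient.mk (Finsupp.single (x, m) (1 : A))
        : StarMod φ S₂ SM act₂ coact₂) = starMk φ S₂ SM act₂ coact₂ x m :=
    fun _ _ => rfl
  have h1 : ∀ (σ τ : L₂) (m : M),
      starMk φ S₂ SM act₂ coact₂ (σ + τ) m
        = starMk φ S₂ SM act₂ coact₂ σ m + starMk φ S₂ SM act₂ coact₂ τ m := by
    intro σ τ m
    have h0 := hmem2 _ (Submodule.subset_span (by
      simp only [Set.mem_union, Set.mem_setOf_eq]
      exact Or.inl (Or.inl (Or.inl (Or.inl (Or.inl (Or.inl (Or.inl ⟨σ, τ, m, rfl⟩))))))))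
    rw [Submodule.Quotient.mk_sub, Submodule.Quotient.mk_sub, hmk2, hmk2, hmk2,
      sub_sub, sub_eq_zero] at h0
    exact h0
  have h2 : ∀ (r : R) (σ : L₂) (m : M),
      starMk φ S₂ SM act₂ coact₂ (r • σ) m = r • starMk φ S₂ SM act₂ coact₂ σ m := by
    intro r σ m
    have h0 := hmem2 _ (Submodule.subset_span (by
      simp only [Set.mem_union, Set.mem_setOf_eq]
      exact Or.inl (Or.inl (Or.inl (Or.inl (Or.inl (Or.inl (Or.inr ⟨r, σ, m, rfl⟩))))))))
    rw [Submodule.Quotient.mk_sub, Submodule.Quotient.mk_smul, hmk2, hmk2,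
      sub_eq_zero] at h0
    exact h0
  have h3 : ∀ (σ : L₂) (m n : M),
      starMk φ S₂ SM act₂ coact₂ σ (m + n)
        = starMk φ S₂ SM act₂ coact₂ σ m + starMk φ S₂ SM act₂ coact₂ σ n := by
    intro σ m n
    have h0 := hmem2 _ (Submodule.subset_span (by
      simp only [Set.mem_union, Set.mem_setOf_eq]
      exact Or.inl (Or.inl (Or.inl (Or.inl (Or.inl (Or.inr ⟨σ, m, n, rfl⟩)))))))
    rw [Submodule.Quotient.mk_sub, Submodule.Quotient.mk_sub, hmk2, hmk2, hmk2,
      sub_sub, sub_eq_zero] at h0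
    exact h0
  have h4 : ∀ (r : R) (σ : L₂) (m : M),
      starMk φ S₂ SM act₂ coact₂ σ (r • m) = r • starMk φ S₂ SM act₂ coact₂ σ m := by
    intro r σ m
    have h0 := hmem2 _ (Submodule.subset_span (by
      simp only [Set.mem_union, Set.mem_setOf_eq]
      exact Or.inl (Or.inl (Or.inl (Or.inl (Or.inr ⟨r, σ, m, rfl⟩))))))
    rw [Submodule.Quotient.mk_sub, Submodule.Quotient.mk_smul, hmk2, hmk2,
      sub_eq_zero] at h0
    exact h0
  have h5 : ∀ (σ τ : L₂) (m : M),
      starMk φ S₂ SM act₂ coact₂ (S₂.bracket σ τ) (SM.alpha m)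
        = starMk φ S₂ SM act₂ coact₂ (S₂.alpha σ) (act₂ τ m)
          - starMk φ S₂ SM act₂ coact₂ (S₂.alpha τ) (act₂ σ m) := by
    intro σ τ m
    have h0 := hmem2 _ (Submodule.subset_span (by
      simp only [Set.mem_union, Set.mem_setOf_eq]
      exact Or.inl (Or.inl (Or.inl (Or.inr ⟨σ, τ, m, rfl⟩)))))
    rw [Submodule.Quotient.mk_add, Submodule.Quotient.mk_sub, hmk2, hmk2, hmk2,
      sub_add, sub_eq_zero] at h0
    exact h0
  have h6 : ∀ (σ : L₂) (m n : M),
      starMk φ S₂ SM act₂ coact₂ (S₂.alpha σ) (SM.bracket m n)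
        = starMk φ S₂ SM act₂ coact₂ (coact₂ n σ) (SM.alpha m)
          - starMk φ S₂ SM act₂ coact₂ (coact₂ m σ) (SM.alpha n) := by
    intro σ m n
    have h0 := hmem2 _ (Submodule.subset_span (by
      simp only [Set.mem_union, Set.mem_setOf_eq]
      exact Or.inl (Or.inl (Or.inr ⟨σ, m, n, rfl⟩))))
    rw [Submodule.Quotient.mk_add, Submodule.Quotient.mk_sub, hmk2, hmk2, hmk2,
      sub_add, sub_eq_zero] at h0
    exact h0
  have h7 : ∀ (a b : A) (σ τ : L₂) (m n : M),
      starMk φ S₂ SM act₂ coact₂ (a • coact₂ m σ) (b • act₂ τ n)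
        = - starMk φ S₂ SM act₂ coact₂ (b • coact₂ n τ) (a • act₂ σ m) := by
    intro a b σ τ m n
    have h0 := hmem2 _ (Submodule.subset_span (by
      simp only [Set.mem_union, Set.mem_setOf_eq]
      exact Or.inl (Or.inr ⟨a, b, σ, τ, m, n, rfl⟩)))
    rw [Submodule.Quotient.mk_add, hmk2, hmk2] at h0
    exact eq_neg_of_add_eq_zero_left h0
  have h8 : ∀ (a b : A) (σ τ : L₂) (m n : M),
      starMk φ S₂ SM act₂ coact₂ (a • coact₂ m σ) (b • act₂ τ n)
        = φ (a * b) • starMk φ S₂ SM act₂ coact₂ (coact₂ m σ) (act₂ τ n)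
          - (φ a * SM.rho (act₂ σ m) b) • starMk φ S₂ SM act₂ coact₂ (S₂.alpha τ) (SM.alpha n)
          + (φ b * SM.rho (act₂ τ n) a) • starMk φ S₂ SM act₂ coact₂ (S₂.alpha σ) (SM.alpha m) := by
    intro a b σ τ m n
    have h0 := hmem2 _ (Submodule.subset_span (by
      simp only [Set.mem_union, Set.mem_setOf_eq]
      exact Or.inr ⟨a, b, σ, τ, m, n, rfl⟩))
    rw [Submodule.Quotient.mk_sub, Submodule.Quotient.mk_add, Submodule.Quotient.mk_sub,
      Submodule.Quotient.mk_smul, Submodule.Quotient.mk_smul, Submodule.Quotient.mk_smul,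
      hmk2, hmk2, hmk2, hmk2, sub_add, sub_sub, sub_eq_zero] at h0
    exact h0
  -- key lemma: modulo range F, the class x ∗ m only depends on g x and m
  have hK : ∀ (σ σ' : L₂) (m : M), g σ = g σ' →
      N.mkQ (starMk φ S₂ SM act₂ coact₂ σ m) = N.mkQ (starMk φ S₂ SM act₂ coact₂ σ' m) := by
    intro σ σ' m h
    have hmem : σ - σ' ∈ Set.range f := by
      rw [hexact]
      show g (σ - σ') = 0
      rw [hgsub, h, sub_self]
    obtain ⟨x, hx⟩ := hmem
    have hσ : σ = σ' + f x := by rw [hx]; abel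
    rw [hσ, h1 σ' (f x) m, map_add, ← hFform x m]
    have hz : N.mkQ (F (starMk φ S₁ SM act₁ coact₁ x m)) = 0 := by
      rw [Submodule.mkQ_apply, Submodule.Quotient.mk_eq_zero]
      exact ⟨starMk φ S₁ SM act₁ coact₁ x m, rfl⟩
    rw [hz, add_zero]
  -- the linear map Ψ₀ on the free module over L₃ × M
  let Ψ₀ : ((L₃ × M) →₀ A) →ₗ[A] (StarMod φ S₂ SM act₂ coact₂ ⧸ N) :=
    Finsupp.linearCombination A
      (fun p : L₃ × M => N.mkQ (starMk φ S₂ SM act₂ coact₂ (s p.1) p.2))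
  have hΨs : ∀ (p : L₃ × M) (a : A),
      Ψ₀ (Finsupp.single p a) = a • N.mkQ (starMk φ S₂ SM act₂ coact₂ (s p.1) p.2) := by
    intro p a; exact Finsupp.linearCombination_single A a p
  -- Ψ₀ kills the relations of L₃ ∗ M
  have hker : starRel φ S₃ SM act₃ coact₃ ≤ LinearMap.ker Ψ₀ := by
    rw [starRel, Submodule.span_le]
    intro t ht
    simp only [Set.mem_union, Set.mem_setOf_eq] at ht
    simp only [SetLike.mem_coe, LinearMap.mem_ker]
    obtain (((((((⟨x, y, m, rfl⟩ | ⟨r, x, m, rfl⟩) | ⟨x, m, n, rfl⟩) | ⟨r, x, m, rfl⟩) |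
        ⟨x, y, m, rfl⟩) | ⟨x, m, n, rfl⟩) | ⟨a, b, x, y, m, n, rfl⟩) |
        ⟨a, b, x, y, m, n, rfl⟩) := ht
    · -- additivity in x
      simp only [map_sub, hΨs, one_smul]
      rw [hK (s (x + y)) (s x + s y) m (by rw [hs, hg.1, hs, hs]), h1, map_add]
      abel
    · -- R-homogeneity in x
      simp only [map_sub, LinearMap.map_smul_of_tower, hΨs, one_smul]
      rw [hK (s (r • x)) (r • s x) m (by rw [hs, hgR, hs]), h2,
        LinearMap.map_smul_of_tower, sub_self]
    · -- additivity in m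
      simp only [map_sub, hΨs, one_smul]
      rw [h3, map_add]
      abel
    · -- R-homogeneity in m
      simp only [map_sub, LinearMap.map_smul_of_tower, hΨs, one_smul]
      rw [h4, LinearMap.map_smul_of_tower, sub_self]
    · -- the bracket relation
      simp only [map_sub, map_add, hΨs, one_smul]
      rw [hact y m, hact x m,
        hK (s (S₃.bracket x y)) (S₂.bracket (s x) (s y)) (SM.alpha m)
          (by rw [hs, hg.2.2.1, hs, hs]),
        hK (s (S₃.alpha x)) (S₂.alpha (s x)) _ (by rw [hs, hg.2.2.2.1, hs]),
        hK (s (S₃.alpha y)) (S₂.alpha (s y)) _ (by rw [hs, hg.2.2.2.1, hs]),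
        h5, map_sub]
      abel
    · -- the M-bracket relation
      simp only [map_sub, map_add, hΨs, one_smul]
      rw [hK (s (S₃.alpha x)) (S₂.alpha (s x)) _ (by rw [hs, hg.2.2.2.1, hs]),
        hK (s (coact₃ n x)) (coact₂ n (s x)) _ (by rw [hs, hpres₃, hs]),
        hK (s (coact₃ m x)) (coact₂ m (s x)) _ (by rw [hs, hpres₃, hs]),
        h6, map_sub]
      abel
    · -- skew-symmetry relation
      simp only [map_add, hΨs, one_smul]
      rw [hact y n, hact x m,
        hK (s (a • coact₃ m x)) (a • coact₂ m (s x)) _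
          (by rw [hs, hg.2.1, hpres₃, hs]),
        hK (s (b • coact₃ n y)) (b • coact₂ n (s y)) _
          (by rw [hs, hg.2.1, hpres₃, hs]),
        h7, map_neg]
      abel
    · -- the A-bilinearity relation
      simp only [map_sub, map_add, map_smul, hΨs, one_smul]
      rw [hact y n, hact x m,
        hK (s (a • coact₃ m x)) (a • coact₂ m (s x)) _
          (by rw [hs, hg.2.1, hpres₃, hs]),
        hK (s (coact₃ m x)) (coact₂ m (s x)) _ (by rw [hs, hpres₃, hs]),
        hK (s (S₃.alpha y)) (S₂.alpha (s y)) _ (by rw [hs, hg.2.2.2.1, hs]),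
        hK (s (S₃.alpha x)) (S₂.alpha (s x)) _ (by rw [hs, hg.2.2.2.1, hs]),
        h8, map_add, map_sub, map_smul, map_smul, map_smul]
      abel
  -- the induced map ψ on L₃ ∗ M
  let ψ : StarMod φ S₃ SM act₃ coact₃ →ₗ[A] (StarMod φ S₂ SM act₂ coact₂ ⧸ N) :=
    (starRel φ S₃ SM act₃ coact₃).liftQ Ψ₀ hker
  have hψmk : ∀ (t : L₃) (m : M),
      ψ (starMk φ S₃ SM act₃ coact₃ t m)
        = N.mkQ (starMk φ S₂ SM act₂ coact₂ (s t) m) := by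
    intro t m
    show ψ (Submodule.Quotient.mk (Finsupp.single (t, m) (1 : A))) = _
    rw [Submodule.liftQ_apply, hΨs, one_smul]
  -- mk of a single, in StarMod₂ and StarMod₃
  have hsingle1 : ∀ (p : L₁ × M) (a : A),
      (Submodule.Quotient.mk (Finsupp.single p a) : StarMod φ S₁ SM act₁ coact₁)
        = a • starMk φ S₁ SM act₁ coact₁ p.1 p.2 := by
    intro p a
    rw [starMk, ← Submodule.Quotient.mk_smul, Finsupp.smul_single', mul_one]
  have hsingle2 : ∀ (p : L₂ × M) (a : A),
      (Submodule.Quotient.mk (Finsupp.single p a) : StarMod φ S₂ SM act₂ coact₂)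
        = a • starMk φ S₂ SM act₂ coact₂ p.1 p.2 := by
    intro p a
    rw [starMk, ← Submodule.Quotient.mk_smul, Finsupp.smul_single', mul_one]
  have hsingle3 : ∀ (p : L₃ × M) (a : A),
      (Submodule.Quotient.mk (Finsupp.single p a) : StarMod φ S₃ SM act₃ coact₃)
        = a • starMk φ S₃ SM act₃ coact₃ p.1 p.2 := by
    intro p a
    rw [starMk, ← Submodule.Quotient.mk_smul, Finsupp.smul_single', mul_one]
  -- ψ ∘ G is the natural projection
  have hψG : ∀ ξ, ψ (G ξ) = N.mkQ ξ := by
    intro ξ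
    obtain ⟨c, rfl⟩ := Submodule.Quotient.mk_surjective _ ξ
    induction c using Finsupp.induction_linear with
    | zero =>
      rw [Submodule.Quotient.mk_zero, hG0, map_zero, map_zero]
    | add c d hc hd =>
      rw [Submodule.Quotient.mk_add, hGhom.1, map_add, hc, hd, map_add]
    | single p a =>
      rw [hsingle2, hGhom.2.1, hGform, map_smul, hψmk,
        hK (s (g p.1)) p.1 p.2 (hs (g p.1)), map_smul]
  -- G is surjective
  have hGsurj : Function.Surjective G := by
    intro ζ
    obtain ⟨c, rfl⟩ := Submodule.Quotient.mk_surjective _ ζ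
    induction c using Finsupp.induction_linear with
    | zero =>
      exact ⟨0, by rw [hG0, Submodule.Quotient.mk_zero]⟩
    | add c d hc hd =>
      obtain ⟨ξ, hξ⟩ := hc
      obtain ⟨η, hη⟩ := hd
      exact ⟨ξ + η, by rw [hGhom.1, hξ, hη, Submodule.Quotient.mk_add]⟩
    | single p a =>
      refine ⟨a • starMk φ S₂ SM act₂ coact₂ (s p.1) p.2, ?_⟩
      rw [hGhom.2.1, hGform, hs, hsingle3]
  -- starMk₃ 0 m = 0
  have hzero3 : ∀ m : M, starMk φ S₃ SM act₃ coact₃ 0 m = 0 := by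
    intro m
    rw [starMk, Submodule.Quotient.mk_eq_zero]
    refine Submodule.subset_span ?_
    simp only [Set.mem_union, Set.mem_setOf_eq]
    exact Or.inl (Or.inl (Or.inl (Or.inl (Or.inl (Or.inl (Or.inr
      ⟨(0 : R), (0 : L₃), m, by simp⟩))))))
  -- G ∘ F = 0
  have hGF : ∀ ξ, G (F ξ) = 0 := by
    intro ξ
    obtain ⟨c, rfl⟩ := Submodule.Quotient.mk_surjective _ ξ
    induction c using Finsupp.induction_linear with
    | zero =>
      rw [Submodule.Quotient.mk_zero, hF0, hG0]
    | add c d hc hd =>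
      rw [Submodule.Quotient.mk_add, hFhom.1, hGhom.1, hc, hd, add_zero]
    | single p a =>
      have hgf : g (f p.1) = 0 := by
        have : f p.1 ∈ Set.range f := ⟨p.1, rfl⟩
        rw [hexact] at this
        exact this
      rw [hsingle1, hFhom.2.1, hFform, hGhom.2.1, hGform, hgf, hzero3, smul_zero]
  -- conclusion
  refine ⟨hGsurj, ?_⟩
  apply Set.Subset.antisymm
  · rintro _ ⟨ξ, rfl⟩
    exact hGF ξ
  · intro ξ hξ
    have h0 : N.mkQ ξ = 0 := by
      rw [← hψG ξ, hξ, map_zero]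
    have : ξ ∈ N := by
      rwa [Submodule.mkQ_apply, Submodule.Quotient.mk_eq_zero] at h0
    exact this
end
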